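/- Let X be a finite-dimensional real inner product space, m ≥ 2, I = {1,…,m}, and for each i ∈ I let g_i : X → (−∞,+∞] be proper lower semicontinuous convex. On 𝐗 = X^m define Δ, 𝐠, 𝐓, and 𝐯 = (v₁,…,v_m) as in the product-space setup, and assume 0 ∈ Δ^⊥ + dom 𝐠* and 𝐙 = {𝐱 : 𝐯 ∈ N_Δ(𝐱) + ∂𝐠(𝐱 − 𝐯)} ≠ ∅. Let x₀ ∈ X and set x_{0,1} = ⋯ = x_{0,m} = x̄₀ = x₀; generate, for every n ∈ ℕ, x_{n+1,i} = x_{n,i} − x̄_n + Prox_{g_i}(2x̄_n − x_{n,i}) for each i ∈ I, and x̄_{n+1} = (1/m) Σ_{i∈I} x_{n+1,i}. Then (x̄_n) converges to a point x̄ ∈ argmin (Σ_{i∈I} g_i(· − v_i)), i.e., x̄ minimizes x ↦ Σ_{i∈I} g_i(x − v_i) over X. -/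

import Mathlib

open scoped RealInnerProductSpace Pointwise
open Filter Topology

noncomputable section

variable {X : Type*}

section Defs
variable [NormedAddCommGroup X] [InnerProductSpace ℝ X]

/-- `p` is the metric projection of `x` onto `S`: `p ∈ S` and
`⟪s − p, x − p⟫ ≤ 0` for all `s ∈ S`. -/
def IsMetricProj (S : Set X) (x p : X) : Prop :=
  p ∈ S ∧ ∀ s ∈ S, ⟪s - p, x - p⟫ ≤ (0 : ℝ)

/-- a function `X → (−∞,+∞]` is proper: never `−∞` and somewhere finite. -/
def EProper (g : X → EReal) : Prop :=
  (∀ x, g x ≠ ⊥) ∧ ∃ x, g x ≠ ⊤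

/-- convexity for extended-real-valued functions. -/
def EConvexOn (g : X → EReal) : Prop :=
  ∀ x y : X, ∀ a b : ℝ, 0 ≤ a → 0 ≤ b → a + b = 1 →
    g (a • x + b • y) ≤ (a : EReal) * g x + (b : EReal) * g y

/-- the convex subdifferential `∂g(x)`. -/
def ESubdiff (g : X → EReal) (x : X) : Set X :=
  {xs | ∀ z : X, g x + ((⟪z - x, xs⟫ : ℝ) : EReal) ≤ g z}

/-- the Fenchel conjugate `g*`. -/
def EConj (g : X → EReal) (xs : X) : EReal :=
  ⨆ x : X, ((⟪x, xs⟫ : ℝ) : EReal) - g x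

/-- `prox` is the proximal mapping of `g`: `prox x` minimizes
`y ↦ g y + ‖y − x‖²/2`. -/
def IsProx (g : X → EReal) (prox : X → X) : Prop :=
  ∀ x y : X,
    g (prox x) + ((‖prox x - x‖ ^ 2 / 2 : ℝ) : EReal) ≤
      g y + ((‖y - x‖ ^ 2 / 2 : ℝ) : EReal)

/-- the normal cone operator of a closed linear subspace:
`N_U(x) = U^⊥` if `x ∈ U`, and `∅` otherwise. -/
def normalCone (U : Submodule ℝ X) (x : X) : Set X :=
  {u | x ∈ U ∧ u ∈ Uᗮ}

/-- `c` is a weak cluster point of the sequence `s`, i.e. the weak limit of a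
subsequence of `s`. -/
def IsWeakClusterPt (s : ℕ → X) (c : X) : Prop :=
  ∃ φ : ℕ → ℕ, StrictMono φ ∧
    ∀ w : X, Tendsto (fun k => (⟪s (φ k), w⟫ : ℝ)) atTop (𝓝 ⟪c, w⟫)

end Defs

section ProductSetup
variable [NormedAddCommGroup X] [InnerProductSpace ℝ X] {m : ℕ}

/-- the inner product of the Hilbert direct sum `𝐗 = X^m`:
`⟪𝐱,𝐲⟫ = Σᵢ ⟪xᵢ,yᵢ⟫`. -/
def bInner (x y : Fin m → X) : ℝ := ∑ i, ⟪x i, y i⟫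

/-- the separable sum `𝐠 = ⊕ᵢ gᵢ`, `𝐠(x₁,…,x_m) = Σᵢ gᵢ(xᵢ)`. -/
def bSum (g : Fin m → X → EReal) (x : Fin m → X) : EReal := ∑ i, g i (x i)

/-- the subdifferential of `𝐠` on `𝐗` (equivalently, `∂g₁ × ⋯ × ∂g_m`). -/
def bSubdiff (g : Fin m → X → EReal) (x : Fin m → X) : Set (Fin m → X) :=
  {b | ∀ z : Fin m → X, bSum g x + ((bInner (z - x) b : ℝ) : EReal) ≤ bSum g z}

/-- metric projection characterization in `𝐗 = X^m`. -/
def bIsMetricProj (S : Set (Fin m → X)) (x p : Fin m → X) : Prop :=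
  p ∈ S ∧ ∀ s ∈ S, bInner (s - p) (x - p) ≤ (0 : ℝ)

end ProductSetup


/-! ### Auxiliary lemmas -/

section AuxReal

lemma real_le_of_forall_t {a b K : ℝ} (hK : 0 ≤ K) (h : ∀ t : ℝ, 0 < t → t ≤ 1 → a ≤ b + t * K) :
    a ≤ b := by
  by_contra hlt
  push_neg at hlt
  have hab : 0 < a - b := by linarith
  have hK1 : (0:ℝ) < 2 * (K + 1) := by linarith
  have ht0 : 0 < min 1 ((a - b) / (2 * (K + 1))) := lt_min one_pos (div_pos hab hK1)
  have ht1 : min 1 ((a - b) / (2 * (K + 1))) ≤ 1 := min_le_left _ _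
  have h2 := h _ ht0 ht1
  have h3 : min 1 ((a - b) / (2 * (K + 1))) ≤ (a - b) / (2 * (K + 1)) := min_le_right _ _
  have h4 : min 1 ((a - b) / (2 * (K + 1))) * K ≤ (a - b) / (2 * (K + 1)) * K :=
    mul_le_mul_of_nonneg_right h3 hK
  have h5 : (a - b) / (2 * (K + 1)) * K < a - b := by
    rw [div_mul_eq_mul_div, div_lt_iff₀ hK1]
    nlinarith
  linarith

lemma ereal_coe_sum {ι : Type*} (s : Finset ι) (f : ι → ℝ) :
    ((∑ i ∈ s, f i : ℝ) : EReal) = ∑ i ∈ s, ((f i : ℝ) : EReal) :=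
  map_sum (⟨⟨(fun r : ℝ => (r : EReal)), EReal.coe_zero⟩, EReal.coe_add⟩ : ℝ →+ EReal) f s

lemma ereal_sum_ne_bot {ι : Type*} [DecidableEq ι] {s : Finset ι} {f : ι → EReal}
    (h : ∀ i ∈ s, f i ≠ ⊥) : ∑ i ∈ s, f i ≠ ⊥ := by
  induction s using Finset.induction_on with
  | empty => simp
  | @insert a s' hx ih =>
      rw [Finset.sum_insert hx, ne_eq, EReal.add_eq_bot_iff]
      push_neg
      exact ⟨h a (Finset.mem_insert_self a s'), ih fun i hi => h i (Finset.mem_insert_of_mem hi)⟩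

lemma ereal_term_real {ι : Type*} [DecidableEq ι] {s : Finset ι} {f : ι → EReal}
    (hb : ∀ i ∈ s, f i ≠ ⊥) (ht : ∑ i ∈ s, f i ≠ ⊤) (j : ι) (hj : j ∈ s) :
    ∃ r : ℝ, f j = (r : EReal) := by
  have hrest : ∑ i ∈ s.erase j, f i ≠ ⊥ :=
    ereal_sum_ne_bot fun i hi => hb i (Finset.mem_of_mem_erase hi)
  have hjt : f j ≠ ⊤ := by
    intro hjj
    apply ht
    rw [← Finset.add_sum_erase s f hj, hjj, EReal.top_add_of_ne_bot hrest]
  exact ⟨(f j).toReal, (EReal.coe_toReal hjt (hb j hj)).symm⟩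

lemma ereal_ne_top_of_add_coe_le {a : EReal} {c R : ℝ} (h : a + (c : EReal) ≤ (R : EReal)) :
    a ≠ ⊤ := by
  intro htop
  rw [htop, EReal.top_add_coe] at h
  exact (EReal.coe_lt_top _).not_ge h

end AuxReal

section AuxProx
variable [NormedAddCommGroup X] [InnerProductSpace ℝ X]

lemma eproper_real {g : X → EReal} (hp : EProper g) {x : X} (h : g x ≠ ⊤) :
    ∃ r : ℝ, g x = (r : EReal) :=
  ⟨(g x).toReal, (EReal.coe_toReal h (hp.1 x)).symm⟩

lemma isProx_ne_top {g : X → EReal} {prox : X → X} (hp : EProper g) (h : IsProx g prox) (q : X) :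
    g (prox q) ≠ ⊤ := by
  obtain ⟨x0, hx0⟩ := hp.2
  obtain ⟨r0, hr0⟩ := eproper_real hp hx0
  intro htop
  have h1 := h q x0
  rw [htop, hr0, EReal.top_add_coe, ← EReal.coe_add] at h1
  exact (EReal.coe_lt_top _).not_ge h1

lemma isProx_real {g : X → EReal} {prox : X → X} (hp : EProper g) (h : IsProx g prox) (q : X) :
    ∃ r : ℝ, g (prox q) = (r : EReal) := eproper_real hp (isProx_ne_top hp h q)

lemma isProx_subgrad {g : X → EReal} (hp : EProper g) (hconv : EConvexOn g) {prox : X → X}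
    (h : IsProx g prox) (q z : X) :
    g (prox q) + ((⟪z - prox q, q - prox q⟫ : ℝ) : EReal) ≤ g z := by
  rcases eq_or_ne (g z) ⊤ with hz | hz
  · rw [hz]; exact le_top
  obtain ⟨Gz, hGz⟩ := eproper_real hp hz
  obtain ⟨Gp, hGp⟩ := isProx_real hp h q
  set p := prox q with hp2
  rw [hGz, hGp, ← EReal.coe_add, EReal.coe_le_coe_iff]
  have key : ∀ t : ℝ, 0 < t → t ≤ 1 →
      Gp ≤ Gz + ⟪p - q, z - p⟫ + t * (‖z - p‖ ^ 2 / 2) := by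
    intro t ht0 ht1
    have hcv := hconv p z (1 - t) t (by linarith) (le_of_lt ht0) (by ring)
    rw [hGp, hGz, ← EReal.coe_mul, ← EReal.coe_mul, ← EReal.coe_add] at hcv
    have hpx := h q ((1 - t) • p + t • z)
    rw [hGp] at hpx
    have hchain : ((Gp + ‖p - q‖ ^ 2 / 2 : ℝ) : EReal) ≤
        (((1 - t) * Gp + t * Gz + ‖(1 - t) • p + t • z - q‖ ^ 2 / 2 : ℝ) : EReal) := by
      calc ((Gp + ‖p - q‖ ^ 2 / 2 : ℝ) : EReal)
          = (Gp : EReal) + ((‖p - q‖ ^ 2 / 2 : ℝ) : EReal) := by rw [← EReal.coe_add]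
        _ ≤ g ((1 - t) • p + t • z) + ((‖(1 - t) • p + t • z - q‖ ^ 2 / 2 : ℝ) : EReal) := hpx
        _ ≤ (((1 - t) * Gp + t * Gz : ℝ) : EReal) +
            ((‖(1 - t) • p + t • z - q‖ ^ 2 / 2 : ℝ) : EReal) := add_le_add_left hcv _
        _ = (((1 - t) * Gp + t * Gz + ‖(1 - t) • p + t • z - q‖ ^ 2 / 2 : ℝ) : EReal) := by
            rw [← EReal.coe_add]
    rw [EReal.coe_le_coe_iff] at hchain
    have hvec : (1 - t) • p + t • z - q = (p - q) + t • (z - p) := by module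
    have hnorm : ‖(1 - t) • p + t • z - q‖ ^ 2
        = ‖p - q‖ ^ 2 + 2 * (t * ⟪p - q, z - p⟫) + t ^ 2 * ‖z - p‖ ^ 2 := by
      rw [hvec, norm_add_sq_real, real_inner_smul_right, norm_smul, Real.norm_eq_abs,
        abs_of_pos ht0]
      ring
    rw [hnorm] at hchain
    have ht2 : t ^ 2 ≤ t * 1 := by nlinarith
    nlinarith
  have hfin := real_le_of_forall_t (a := Gp) (b := Gz + ⟪p - q, z - p⟫)
    (K := ‖z - p‖ ^ 2 / 2) (by positivity) key
  have hsym : ⟪z - p, q - p⟫ = -⟪p - q, z - p⟫ := by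
    rw [real_inner_comm, show q - p = -(p - q) by module, inner_neg_left]
  rw [hsym]; linarith

lemma isProx_firm {g : X → EReal} (hp : EProper g) (hconv : EConvexOn g) {prox : X → X}
    (h : IsProx g prox) (q q' : X) :
    ‖prox q - prox q'‖ ^ 2 ≤ ⟪prox q - prox q', q - q'⟫ := by
  obtain ⟨Gp, hGp⟩ := isProx_real hp h q
  obtain ⟨Gp', hGp'⟩ := isProx_real hp h q'
  set p := prox q
  set p' := prox q'
  have h1 := isProx_subgrad hp hconv h q p'
  have h2 := isProx_subgrad hp hconv h q' p
  rw [hGp, hGp', ← EReal.coe_add, EReal.coe_le_coe_iff] at h1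
  rw [hGp, hGp', ← EReal.coe_add, EReal.coe_le_coe_iff] at h2
  have e1 : ⟪p' - p, q - p⟫ + ⟪p - p', q' - p'⟫ ≤ 0 := by linarith
  have e2 : ⟪p' - p, q - p⟫ = -⟪p - p', q - p⟫ := by
    rw [show p' - p = -(p - p') by module, inner_neg_left]
  have e3 : ⟪p - p', q - p⟫ - ⟪p - p', q' - p'⟫ = ⟪p - p', (q - q') - (p - p')⟫ := by
    rw [← inner_sub_right]
    congr 1
    module
  have e4 : ⟪p - p', (q - q') - (p - p')⟫ = ⟪p - p', q - q'⟫ - ⟪p - p', p - p'⟫ :=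
    inner_sub_right _ _ _
  have e5 : ⟪p - p', p - p'⟫ = ‖p - p'‖ ^ 2 := real_inner_self_eq_norm_sq _
  linarith

lemma isProx_of_subgrad {g : X → EReal} (hp : EProper g) {prox : X → X}
    (h : IsProx g prox) {q p : X}
    (hs : ∀ z : X, g p + ((⟪z - p, q - p⟫ : ℝ) : EReal) ≤ g z) : prox q = p := by
  obtain ⟨x0, hx0⟩ := hp.2
  obtain ⟨r0, hr0⟩ := eproper_real hp hx0
  have hpt : g p ≠ ⊤ := by
    intro htop
    have := hs x0
    rw [htop, hr0, EReal.top_add_coe] at this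
    exact (EReal.coe_lt_top _).not_ge this
  obtain ⟨Gp, hGp⟩ := eproper_real hp hpt
  obtain ⟨Gq, hGq⟩ := isProx_real hp h q
  have h1 := hs (prox q)
  rw [hGp, hGq, ← EReal.coe_add, EReal.coe_le_coe_iff] at h1
  have h2 := h q p
  rw [hGp, hGq, ← EReal.coe_add, ← EReal.coe_add, EReal.coe_le_coe_iff] at h2
  set e := prox q - p with he
  have hn : ‖prox q - q‖ ^ 2 = ‖p - q‖ ^ 2 + 2 * ⟪e, p - q⟫ + ‖e‖ ^ 2 := by
    rw [show prox q - q = (p - q) + e by module, norm_add_sq_real, real_inner_comm]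
  have hip : ⟪e, q - p⟫ = -⟪e, p - q⟫ := by
    rw [show q - p = -(p - q) by module, inner_neg_right]
  have hen : 0 ≤ ‖e‖ ^ 2 := by positivity
  have hle : ‖e‖ ^ 2 ≤ 0 := by nlinarith
  have : e = 0 := norm_eq_zero.mp (by nlinarith [norm_nonneg e])
  rw [he, sub_eq_zero] at this
  exact this

lemma econj_fy {g : X → EReal} {w : X} (hw : EConj g w ≠ ⊤) {p : X} {Gp : ℝ}
    (hGp : g p = (Gp : EReal)) : ⟪p, w⟫ ≤ Gp + (EConj g w).toReal := by
  have h1 : ((⟪p, w⟫ : ℝ) : EReal) - g p ≤ EConj g w :=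
    le_iSup (fun x : X => ((⟪x, w⟫ : ℝ) : EReal) - g x) p
  rw [hGp, ← EReal.coe_sub] at h1
  have hbot : EConj g w ≠ ⊥ := by
    intro hb
    rw [hb] at h1
    exact (EReal.bot_lt_coe _).not_ge h1
  rw [show EConj g w = ((EConj g w).toReal : EReal) from (EReal.coe_toReal hw hbot).symm,
    EReal.coe_le_coe_iff] at h1
  linarith

/-- lower semicontinuity transfer to limits -/
lemma lsc_le_of_tendsto {g : X → EReal} (hg : LowerSemicontinuous g) {pt : ℕ → X} {p : X}
    (hp : Tendsto pt atTop (𝓝 p)) {G : ℕ → ℝ} (hG : ∀ k, g (pt k) = ((G k : ℝ) : EReal))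
    {γ : ℝ} (hγ : Tendsto G atTop (𝓝 γ)) : g p ≤ ((γ : ℝ) : EReal) := by
  by_contra hlt
  push_neg at hlt
  obtain ⟨yy, h1, h2⟩ := exists_between hlt
  have hev : ∀ᶠ k in atTop, yy < g (pt k) := hp.eventually (hg p yy h2)
  rcases eq_or_ne yy ⊤ with rfl | hytop
  · obtain ⟨k, hk⟩ := hev.exists
    rw [hG k] at hk
    exact not_top_lt (lt_trans hk (EReal.coe_lt_top _))
  have hybot : yy ≠ ⊥ := by
    intro hbot; rw [hbot] at h1; exact not_lt_bot (lt_of_le_of_lt bot_le h1)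
  obtain ⟨ry, hry⟩ : ∃ r : ℝ, yy = (r : EReal) := ⟨yy.toReal, (EReal.coe_toReal hytop hybot).symm⟩
  rw [hry] at h1 hev
  rw [EReal.coe_lt_coe_iff] at h1
  have hev2 : ∀ᶠ k in atTop, ry < G k := by
    filter_upwards [hev] with k hk
    rw [hG k, EReal.coe_lt_coe_iff] at hk
    exact hk
  have hge : ry ≤ γ := ge_of_tendsto hγ (hev2.mono fun k hk => le_of_lt hk)
  linarith

end AuxProx

section AuxProd
variable [NormedAddCommGroup X] [InnerProductSpace ℝ X] {m : ℕ}

lemma bInner_comm (x y : Fin m → X) : bInner x y = bInner y x :=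
  Finset.sum_congr rfl fun i _ => real_inner_comm _ _

lemma bInner_add_right (x y z : Fin m → X) : bInner x (y + z) = bInner x y + bInner x z := by
  unfold bInner
  rw [← Finset.sum_add_distrib]
  exact Finset.sum_congr rfl fun i _ => inner_add_right _ _ _

lemma bInner_add_left (x y z : Fin m → X) : bInner (x + y) z = bInner x z + bInner y z := by
  rw [bInner_comm, bInner_add_right, bInner_comm z x, bInner_comm z y]

lemma bInner_neg_right (x y : Fin m → X) : bInner x (-y) = -bInner x y := by
  unfold bInner
  rw [← Finset.sum_neg_distrib]
  exact Finset.sum_congr rfl fun i _ => inner_neg_right _ _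

lemma bInner_sub_right (x y z : Fin m → X) : bInner x (y - z) = bInner x y - bInner x z := by
  rw [sub_eq_add_neg, bInner_add_right, bInner_neg_right]; ring

lemma bInner_sub_left (x y z : Fin m → X) : bInner (x - y) z = bInner x z - bInner y z := by
  rw [bInner_comm, bInner_sub_right, bInner_comm z x, bInner_comm z y]

lemma bInner_smul_right (r : ℝ) (x y : Fin m → X) : bInner x (r • y) = r * bInner x y := by
  unfold bInner
  rw [Finset.mul_sum]
  exact Finset.sum_congr rfl fun i _ => real_inner_smul_right _ _ _

lemma bInner_self_nonneg (x : Fin m → X) : 0 ≤ bInner x x :=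
  Finset.sum_nonneg fun i _ => real_inner_self_nonneg

lemma bInner_component_le (x : Fin m → X) (j : Fin m) : ‖x j‖ ^ 2 ≤ bInner x x := by
  rw [← real_inner_self_eq_norm_sq]
  exact Finset.single_le_sum (f := fun i => ⟪x i, x i⟫) (fun i _ => real_inner_self_nonneg)
    (Finset.mem_univ j)

lemma bInner_diag_left (c : X) (y : Fin m → X) : bInner (fun _ => c) y = ⟪c, ∑ i, y i⟫ := by
  unfold bInner
  rw [inner_sum]

lemma bInner_diag_right (c : X) (y : Fin m → X) : bInner y (fun _ => c) = ⟪∑ i, y i, c⟫ := by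
  rw [bInner_comm, bInner_diag_left, real_inner_comm]

lemma bInner_abs_le (x y : Fin m → X) (A B : ℝ) (hA : ∀ i, ‖x i‖ ≤ A) (hB : ∀ i, ‖y i‖ ≤ B)
    (hA0 : 0 ≤ A) : |bInner x y| ≤ m * (A * B) := by
  calc |bInner x y| ≤ ∑ i, |⟪x i, y i⟫| := Finset.abs_sum_le_sum_abs _ _
    _ ≤ ∑ _i : Fin m, A * B := by
        apply Finset.sum_le_sum
        intro i _
        calc |⟪x i, y i⟫| ≤ ‖x i‖ * ‖y i‖ := abs_real_inner_le_norm _ _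
          _ ≤ A * B := mul_le_mul (hA i) (hB i) (norm_nonneg _) hA0
    _ = m * (A * B) := by simp [Finset.sum_const, Finset.card_univ]

lemma bInner_sq_sub (x y : Fin m → X) :
    bInner (x - y) (x - y) = bInner x x - 2 * bInner x y + bInner y y := by
  rw [bInner_sub_left, bInner_sub_right, bInner_sub_right, bInner_comm y x]; ring

/-- componentwise extraction from `bSubdiff` -/
lemma bSubdiff_real (g : Fin m → X → EReal) (hgproper : ∀ i, EProper (g i))
    {x bb : Fin m → X} (hb : bb ∈ bSubdiff g x) :
    ∃ R : Fin m → ℝ, (∀ i, g i (x i) = ((R i : ℝ) : EReal)) ∧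
      ∀ (j : Fin m) (y : X), ((R j : ℝ) : EReal) + ((⟪y - x j, bb j⟫ : ℝ) : EReal) ≤ g j y := by
  classical
  choose ζ hζ using fun i => (hgproper i).2
  choose Rζ hRζ using fun i => eproper_real (hgproper i) (hζ i)
  have hdom := hb (fun i => ζ i)
  have hsumz : bSum g (fun i => ζ i) = ((∑ i, Rζ i : ℝ) : EReal) := by
    unfold bSum
    rw [ereal_coe_sum]
    exact Finset.sum_congr rfl fun i _ => hRζ i
  rw [hsumz] at hdom
  have hnt : bSum g x ≠ ⊤ := ereal_ne_top_of_add_coe_le hdom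
  have hterm : ∀ j : Fin m, ∃ r : ℝ, g j (x j) = (r : EReal) := by
    intro j
    exact ereal_term_real (f := fun i => g i (x i)) (fun i _ => (hgproper i).1 (x i)) hnt j
      (Finset.mem_univ j)
  choose R hR using hterm
  refine ⟨R, hR, ?_⟩
  intro j y
  rcases eq_or_ne (g j y) ⊤ with hy | hy
  · rw [hy]; exact le_top
  obtain ⟨Gy, hGy⟩ := eproper_real (hgproper j) hy
  have hb2 := hb (Function.update x j y)
  -- compute the two bSums
  have hbx : bSum g x = ((∑ i, R i : ℝ) : EReal) := by
    unfold bSum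
    rw [ereal_coe_sum]
    exact Finset.sum_congr rfl fun i _ => hR i
  have hfun : (fun i => g i (Function.update x j y i)) =
      Function.update (fun i => g i (x i)) j (g j y) := by
    funext i
    by_cases hij : i = j
    · subst hij; simp [Function.update_self]
    · simp [Function.update_of_ne hij]
  have hbz : bSum g (Function.update x j y) = g j y + ∑ i ∈ Finset.univ \ {j}, g i (x i) := by
    unfold bSum
    calc ∑ i, g i (Function.update x j y i)
        = ∑ i, Function.update (fun i => g i (x i)) j (g j y) i := by rw [hfun]
      _ = g j y + ∑ i ∈ Finset.univ \ {j}, g i (x i) :=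
          Finset.sum_update_of_mem (Finset.mem_univ j) _ _
  have hbxsplit : bSum g x = g j (x j) + ∑ i ∈ Finset.univ \ {j}, g i (x i) := by
    unfold bSum
    rw [Finset.sdiff_singleton_eq_erase, ← Finset.add_sum_erase Finset.univ _ (Finset.mem_univ j)]
  have hrest : ∑ i ∈ Finset.univ \ {j}, g i (x i) =
      ((∑ i ∈ Finset.univ \ {j}, R i : ℝ) : EReal) := by
    rw [ereal_coe_sum]
    exact Finset.sum_congr rfl fun i _ => hR i
  have hinner : bInner (Function.update x j y - x) bb = ⟪y - x j, bb j⟫ := by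
    unfold bInner
    rw [Finset.sum_eq_single j]
    · simp [Function.update_self]
    · intro i _ hij
      simp [Function.update_of_ne hij]
    · intro habs; exact absurd (Finset.mem_univ j) habs
  rw [hbz, hbxsplit, hrest, hR j, hGy, hinner] at hb2
  rw [hGy]
  simp only [← EReal.coe_add, EReal.coe_le_coe_iff] at hb2 ⊢
  linarith

end AuxProd

section AuxTheta
variable [NormedAddCommGroup X] [InnerProductSpace ℝ X] {m : ℕ}

/-- the key firm-nonexpansiveness inequality for one step of the DR iteration,
against a "shifted fixed point" `y`. -/
lemma theta_inner_nonneg (hm : (m : ℝ) ≠ 0) (g : Fin m → X → EReal)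
    (hgproper : ∀ i, EProper (g i)) (hgconv : ∀ i, EConvexOn (g i))
    (prox : Fin m → X → X) (hprox : ∀ i, IsProx (g i) (prox i))
    (v : Fin m → X) (xc : Fin m → X) (xbc : X) (hxbc : xbc = (m : ℝ)⁻¹ • ∑ i, xc i)
    (y : Fin m → X) (c : X) (hc : c = (m : ℝ)⁻¹ • ∑ i, y i)
    (hy : ∀ i, prox i (2 • c - y i) = c - v i) :
    0 ≤ bInner ((xc - y) - fun i => (xbc - prox i (2 • xbc - xc i)) - v i)
        (fun i => (xbc - prox i (2 • xbc - xc i)) - v i) := by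
  set u : Fin m → X := xc - y with hu
  set δ : Fin m → X := fun i => prox i (2 • xbc - xc i) - prox i (2 • c - y i) with hδ
  set cc : X := xbc - c with hcc
  set π : Fin m → X := fun _ => cc with hπ
  have hsumxc : ∑ i, xc i = (m : ℝ) • xbc := by
    rw [hxbc, smul_inv_smul₀ hm]
  have hsumy : ∑ i, y i = (m : ℝ) • c := by
    rw [hc, smul_inv_smul₀ hm]
  have hec : (fun i => (xbc - prox i (2 • xbc - xc i)) - v i) = π - δ := by
    funext i
    have h1 : v i = c - prox i (2 • c - y i) := by rw [hy i]; abel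
    simp only [hδ, hπ, hcc, Pi.sub_apply, h1]
    abel
  rw [hec]
  -- firm nonexpansiveness of prox, summed
  have hfirm : bInner δ δ ≤ bInner δ (π + π - u) := by
    have h1 : ∀ i, ‖δ i‖ ^ 2 ≤ ⟪δ i, (π + π - u) i⟫ := by
      intro i
      have h2 := isProx_firm (hgproper i) (hgconv i) (hprox i) (2 • xbc - xc i) (2 • c - y i)
      have h3 : (2 • xbc - xc i) - (2 • c - y i) = (π + π - u) i := by
        simp only [hπ, hu, hcc, Pi.add_apply, Pi.sub_apply, two_smul]
        abel
      rw [h3] at h2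
      exact h2
    calc bInner δ δ = ∑ i, ⟪δ i, δ i⟫ := rfl
      _ ≤ ∑ i, ⟪δ i, (π + π - u) i⟫ := by
          apply Finset.sum_le_sum
          intro i _
          rw [real_inner_self_eq_norm_sq]
          exact h1 i
      _ = bInner δ (π + π - u) := rfl
  -- ⟪u, π⟫ = ⟪π, π⟫
  have huπ : bInner u π = bInner π π := by
    have h1 : bInner u π = ⟪∑ i, u i, cc⟫ := bInner_diag_right cc u
    have h2 : ∑ i, u i = (m : ℝ) • cc := by
      simp only [hu, Pi.sub_apply]
      rw [Finset.sum_sub_distrib, hsumxc, hsumy, hcc, smul_sub]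
    have h3 : bInner π π = ∑ _i : Fin m, ⟪cc, cc⟫ := rfl
    rw [h1, h2, real_inner_smul_left, h3]
    simp [Finset.sum_const, Finset.card_univ, mul_comm]
  -- expansion
  have hexp : bInner (u - (π - δ)) (π - δ)
      = bInner δ (π + π - u) - bInner δ δ + (bInner u π - bInner π π) := by
    have e1 : u - (π - δ) = u - π + δ := by abel
    rw [e1, bInner_add_left, bInner_sub_left, bInner_sub_right, bInner_sub_right,
      bInner_sub_right δ (π + π) u, bInner_add_right, bInner_sub_right,
      bInner_comm δ u, bInner_comm δ π]
    ring
  rw [hexp, huπ]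
  have := sub_nonneg.mpr hfirm
  linarith
end AuxTheta

section AuxAn
variable [NormedAddCommGroup X] [InnerProductSpace ℝ X] {m : ℕ}

lemma an_identity (hmne : (m:ℝ) ≠ 0) (chat MZ V : X) (η : ℝ) (v zc ee : Fin m → X)
    (hV : V = ∑ i, v i) (hMZ : MZ = (m:ℝ)⁻¹ • ∑ i, zc i) :
    (∑ i, ⟪(chat - (MZ - (η/(m:ℝ)) • V)) + ee i,
      ((MZ - (η/(m:ℝ)) • V) - (zc i - η • v i)) + v i + ee i⟫)
    = (η/(m:ℝ)) * ⟪V, V⟫ + (η+1) * bInner ee v + bInner ee ee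
      + ⟪chat - MZ, V + ∑ i, ee i⟫ + bInner ee (fun i => MZ - zc i) := by
  set A : X := chat - (MZ - (η/(m:ℝ)) • V) with hA
  set R : Fin m → X := fun i => ((MZ - (η/(m:ℝ)) • V) - (zc i - η • v i)) + v i + ee i with hR
  have hsumzc : ∑ i, zc i = (m:ℝ) • MZ := by rw [hMZ, smul_inv_smul₀ hmne]
  have hscal : (m:ℝ) • ((η/(m:ℝ)) • V) = η • V := by
    rw [smul_smul]
    congr 1
    field_simp
  -- split each inner product
  have hsplit : (∑ i, ⟪A + ee i, R i⟫) = ⟪A, ∑ i, R i⟫ + bInner ee R := by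
    unfold bInner
    rw [inner_sum, ← Finset.sum_add_distrib]
    exact Finset.sum_congr rfl fun i _ => inner_add_left _ _ _
  -- sum of the right factors
  have hRsum : ∑ i, R i = V + ∑ i, ee i := by
    have h1 : ∀ i, R i = (MZ - (η/(m:ℝ)) • V) - zc i + η • v i + v i + ee i := fun i => by
      simp only [hR]; abel
    calc ∑ i, R i = ∑ i, ((MZ - (η/(m:ℝ)) • V) - zc i + η • v i + v i + ee i) :=
          Finset.sum_congr rfl fun i _ => h1 i
      _ = ((m:ℝ) • (MZ - (η/(m:ℝ)) • V) - ∑ i, zc i + η • ∑ i, v i) + ∑ i, v i + ∑ i, ee i := by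
          rw [Finset.sum_add_distrib, Finset.sum_add_distrib, Finset.sum_add_distrib,
            Finset.sum_sub_distrib, Finset.sum_const, Finset.card_univ, Fintype.card_fin,
            ← Nat.cast_smul_eq_nsmul ℝ m (MZ - (η/(m:ℝ)) • V), ← Finset.smul_sum]
      _ = V + ∑ i, ee i := by
          rw [hsumzc, ← hV, smul_sub, hscal]
          abel
  -- the A part
  have hApart : ⟪A, ∑ i, R i⟫ = ⟪chat - MZ, V + ∑ i, ee i⟫
      + (η/(m:ℝ)) * ⟪V, V⟫ + (η/(m:ℝ)) * ⟪V, ∑ i, ee i⟫ := by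
    rw [hRsum, hA, show chat - (MZ - (η/(m:ℝ)) • V) = (chat - MZ) + (η/(m:ℝ)) • V by abel,
      inner_add_left, real_inner_smul_left, inner_add_right, inner_add_right V V (∑ i, ee i)]
    ring
  -- the ee part
  have hbpart : bInner ee R = bInner ee (fun i => MZ - zc i) + (η+1) * bInner ee v
      - (η/(m:ℝ)) * ⟪∑ i, ee i, V⟫ + bInner ee ee := by
    have h1 : ∀ i, ⟪ee i, R i⟫ = ⟪ee i, MZ - zc i⟫ + η * ⟪ee i, v i⟫
        - (η/(m:ℝ)) * ⟪ee i, V⟫ + ⟪ee i, v i⟫ + ⟪ee i, ee i⟫ := by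
      intro i
      have h2 : R i = ((MZ - zc i) + η • v i) - (η/(m:ℝ)) • V + v i + ee i := by
        simp only [hR]; abel
      rw [h2, inner_add_right, inner_add_right, inner_sub_right, inner_add_right,
        real_inner_smul_right, real_inner_smul_right]
      try ring
    have h3 : bInner ee R = ∑ i, (⟪ee i, MZ - zc i⟫ + η * ⟪ee i, v i⟫
        - (η/(m:ℝ)) * ⟪ee i, V⟫ + ⟪ee i, v i⟫ + ⟪ee i, ee i⟫) :=
      Finset.sum_congr rfl fun i _ => h1 i
    rw [h3]
    rw [Finset.sum_add_distrib, Finset.sum_add_distrib, Finset.sum_sub_distrib,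
      Finset.sum_add_distrib, ← Finset.mul_sum, ← Finset.mul_sum, ← sum_inner]
    have : ∑ i, ⟪ee i, v i⟫ = bInner ee v := rfl
    have h4 : ∑ i, ⟪ee i, ee i⟫ = bInner ee ee := rfl
    have h5 : ∑ i, ⟪ee i, MZ - zc i⟫ = bInner ee (fun i => MZ - zc i) := rfl
    rw [this, h4, h5]
    ring
  rw [hsplit, hApart, hbpart, real_inner_comm (∑ i, ee i) V, inner_add_right]
  ring

end AuxAn

section AuxBW
variable {E : Type*} [PseudoMetricSpace E] [ProperSpace E]
lemma bw_subseq (s : ℕ → E) (C : ℝ) (x₀ : E) (h : ∀ n, s n ∈ Metric.closedBall x₀ C) :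
    ∃ l : E, ∃ ψ : ℕ → ℕ, StrictMono ψ ∧ Tendsto (s ∘ ψ) atTop (𝓝 l) := by
  obtain ⟨l, -, ψ, hψ, hlim⟩ := tendsto_subseq_of_bounded Metric.isBounded_closedBall h
  exact ⟨l, ψ, hψ, hlim⟩
end AuxBW
set_option maxHeartbeats 1600000 in
/-- **parallel splitting.** In the product-space setup on `𝐗 = X^m`
(diagonal `Δ`, `𝐠 = ⊕ᵢ gᵢ`, `𝐓 = Id − P_Δ + Prox_𝐠 ∘ R_Δ`, minimal displacement
vector `𝐯 = (v₁,…,v_m)`), assuming `0 ∈ Δ^⊥ + dom 𝐠*` and `𝐙 ≠ ∅`: starting from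
`x_{0,i} = x̄₀ = x₀` and iterating
`x_{n+1,i} = x_{n,i} − x̄ₙ + Prox_{gᵢ}(2x̄ₙ − x_{n,i})`,
`x̄_{n+1} = (1/m) Σᵢ x_{n+1,i}`, the averaged sequence `(x̄ₙ)` converges to a
minimizer of `x ↦ Σᵢ gᵢ(x − vᵢ)` over `X`. -/
theorem parallel_splitting_convergence
    [NormedAddCommGroup X] [InnerProductSpace ℝ X] [FiniteDimensional ℝ X]
    {m : ℕ} (hm : 2 ≤ m)
    (g : Fin m → X → EReal)
    (hgproper : ∀ i, EProper (g i)) (hglsc : ∀ i, LowerSemicontinuous (g i))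
    (hgconv : ∀ i, EConvexOn (g i))
    (prox : Fin m → X → X) (hprox : ∀ i, IsProx (g i) (prox i))
    (PD T : (Fin m → X) → (Fin m → X))
    (hPD : ∀ x : Fin m → X, PD x = fun _ => (m : ℝ)⁻¹ • ∑ i, x i)
    (hT : ∀ x : Fin m → X, T x = x - PD x + fun i => prox i ((2 • PD x - x) i))
    (v : Fin m → X)
    (hv : bIsMetricProj (closure (Set.range fun x : Fin m → X => x - T x)) 0 v)
    (hCQ : ∃ u w : Fin m → X,
      (∑ i, u i) = (0 : X) ∧ (∀ i, EConj (g i) (w i) ≠ ⊤) ∧ u + w = 0)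
    (Z : Set (Fin m → X))
    (hZ : Z = {x | ∃ a b : Fin m → X,
      ((∃ c : X, ∀ i, x i = c) ∧ (∑ i, a i) = (0 : X)) ∧
      b ∈ bSubdiff g (x - v) ∧ v = a + b})
    (hZne : Z.Nonempty)
    (x0 : X) (xs : ℕ → Fin m → X) (xb : ℕ → X)
    (hinit : ∀ i, xs 0 i = x0)
    (hxb : ∀ n : ℕ, xb n = (m : ℝ)⁻¹ • ∑ i, xs n i)
    (hrec : ∀ (n : ℕ) (i : Fin m),
      xs (n + 1) i = xs n i - xb n + prox i (2 • xb n - xs n i)) :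
    ∃ xbar : X, Tendsto xb atTop (𝓝 xbar) ∧
      ∀ z : X, (∑ i, g i (xbar - v i)) ≤ ∑ i, g i (z - v i) := by
  classical
  -- ### unpack the hypotheses
  obtain ⟨u0, w, husum, hwtop, huw⟩ := hCQ
  obtain ⟨xhat, hxhatZ⟩ := hZne
  rw [hZ] at hxhatZ
  obtain ⟨a, b, ⟨⟨chat, hchat⟩, hasum⟩, hbsub, hvab⟩ := hxhatZ
  have hmpos : 0 < m := lt_of_lt_of_le (by norm_num) hm
  have hmR : (0:ℝ) < (m:ℝ) := by exact_mod_cast hmpos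
  have hmne : (m:ℝ) ≠ 0 := ne_of_gt hmR
  have hwsum : ∑ i, w i = 0 := by
    have hw : w = -u0 := by
      have h1 : u0 + w = 0 := huw
      funext i
      have := congrFun h1 i
      simp only [Pi.add_apply, Pi.zero_apply] at this
      simp only [Pi.neg_apply]
      linear_combination (norm := module) this
    rw [hw]
    simp only [Pi.neg_apply]
    rw [Finset.sum_neg_distrib, husum, neg_zero]
  have hvib : ∀ i, v i = a i + b i := fun i => by
    have := congrFun hvab i; simpa using this
  -- ### values of g at the reference solution
  obtain ⟨Bh, hBh0, hbi0⟩ := bSubdiff_real g hgproper hbsub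
  have hxv : ∀ i, (xhat - v) i = chat - v i := fun i => by
    simp [Pi.sub_apply, hchat i]
  have hBh : ∀ i, g i (chat - v i) = ((Bh i : ℝ) : EReal) := fun i => by
    rw [← hxv i]; exact hBh0 i
  have hbi : ∀ (i : Fin m) (y : X),
      ((Bh i : ℝ) : EReal) + ((⟪y - (chat - v i), b i⟫ : ℝ) : EReal) ≤ g i y := by
    intro i y
    have := hbi0 i y
    rwa [hxv i] at this
  -- ### the sequences of the iteration
  set p : ℕ → Fin m → X := fun n i => prox i (2 • xb n - xs n i) with hpdef
  set e : ℕ → Fin m → X := fun n i => (xb n - prox i (2 • xb n - xs n i)) - v i with hedef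
  set z : ℕ → Fin m → X := fun n i => xs n i + (n : ℝ) • v i with hzdef
  have hpe : ∀ n i, p n i = xb n - v i - e n i := by
    intro n i; simp only [hpdef, hedef]; abel
  have hsum_xs : ∀ n, ∑ i, xs n i = (m:ℝ) • xb n := by
    intro n; rw [hxb n, smul_inv_smul₀ hmne]
  have hz1 : ∀ n, z (n + 1) = z n - e n := by
    intro n
    funext i
    simp only [hzdef, hedef, Pi.sub_apply, hrec n i]
    push_cast
    module
  -- ### the variational inequality from the metric projection
  have hEV : ∀ n, 0 ≤ bInner (e n) v := by
    intro n
    have hTx : xs n - T (xs n) = e n + v := by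
      funext i
      simp only [Pi.sub_apply, Pi.add_apply, hT (xs n), hPD (xs n), hedef]
      have hPDi : (m:ℝ)⁻¹ • ∑ j, xs n j = xb n := (hxb n).symm
      simp only [Pi.add_apply, Pi.sub_apply, Pi.smul_apply, hPDi]
      abel
    have h1 := hv.2 (xs n - T (xs n)) (subset_closure ⟨xs n, rfl⟩)
    rw [hTx] at h1
    have h2 : e n + v - v = e n := by abel
    rw [h2, zero_sub, bInner_neg_right] at h1
    linarith
  -- ### the Fejér inequality
  have fejer : ∀ (y : Fin m → X) (c : X), c = (m:ℝ)⁻¹ • ∑ i, y i →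
      (∀ i, prox i (2 • c - y i) = c - v i) → ∀ n : ℕ,
      bInner (z (n+1) - y) (z (n+1) - y) ≤
        bInner (z n - y) (z n - y) - bInner (e n) (e n) - 2*(n:ℝ) * bInner (e n) v := by
    intro y c hc hy n
    have hθ := theta_inner_nonneg hmne g hgproper hgconv prox hprox v (xs n) (xb n) (hxb n)
      y c hc hy
    have hee : (fun i => (xb n - prox i (2 • xb n - xs n i)) - v i) = e n := rfl
    rw [hee] at hθ
    have hzy : z (n+1) - y = (z n - y) - e n := by rw [hz1 n]; abel
    rw [hzy, bInner_sq_sub]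
    have hdecomp : z n - y = (xs n - y) + (n:ℝ) • v := by
      funext i; simp only [hzdef, Pi.sub_apply, Pi.add_apply, Pi.smul_apply]; abel
    have h3 : bInner (z n - y) (e n) = bInner (xs n - y) (e n) + (n:ℝ) * bInner v (e n) := by
      rw [hdecomp, bInner_add_left, bInner_comm ((n:ℝ) • v) (e n), bInner_smul_right,
        bInner_comm (e n) v]
    have h4 : bInner ((xs n - y) - e n) (e n)
        = bInner (xs n - y) (e n) - bInner (e n) (e n) := bInner_sub_left _ _ _
    rw [h4] at hθ
    have h5 : bInner v (e n) = bInner (e n) v := bInner_comm _ _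
    nlinarith [hEV n]
  -- ### the reference fixed point ŷ = x̂ + a
  set yhat : Fin m → X := fun i => chat + a i with hyhatdef
  have hyhatmean : chat = (m:ℝ)⁻¹ • ∑ i, yhat i := by
    simp only [hyhatdef]
    rw [Finset.sum_add_distrib, hasum, add_zero, Finset.sum_const, Finset.card_univ,
      Fintype.card_fin]
    rw [← Nat.cast_smul_eq_nsmul ℝ m chat, inv_smul_smul₀ hmne]
  -- a generic fixed-point construction from a subgradient certificate
  have mk_prox : ∀ (c : X), (∀ (i : Fin m) (zz : X),
      g i (c - v i) + ((⟪zz - (c - v i), b i⟫ : ℝ) : EReal) ≤ g i zz) →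
      ∀ i, prox i (2 • c - (c + a i)) = c - v i := by
    intro c hc i
    have harg : 2 • c - (c + a i) = c - a i := by rw [two_smul]; abel
    rw [harg]
    apply isProx_of_subgrad (hgproper i) (hprox i)
    intro zz
    have hq : (c - a i) - (c - v i) = b i := by
      rw [hvib i]; abel
    rw [hq]
    exact hc i zz
  have hbi' : ∀ (i : Fin m) (zz : X),
      g i (chat - v i) + ((⟪zz - (chat - v i), b i⟫ : ℝ) : EReal) ≤ g i zz := by
    intro i zz
    rw [hBh i]
    exact hbi i zz
  have hyhatprox : ∀ i, prox i (2 • chat - yhat i) = chat - v i := mk_prox chat hbi'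
  -- ### Fejér monotonicity quantities
  set Q : ℕ → ℝ := fun n => bInner (z n - yhat) (z n - yhat) with hQdef
  set EE : ℕ → ℝ := fun n => bInner (e n) (e n) with hEEdef
  have hQfejer : ∀ n, Q (n+1) ≤ Q n - EE n - 2*(n:ℝ) * bInner (e n) v :=
    fejer yhat chat hyhatmean hyhatprox
  have hQstep : ∀ n, Q (n+1) + EE n ≤ Q n := by
    intro n
    have h2 := hEV n
    have h3 : 0 ≤ 2*(n:ℝ) * bInner (e n) v := by positivity
    have := hQfejer n
    linarith
  have hQnonneg : ∀ n, 0 ≤ Q n := fun n => bInner_self_nonneg _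
  have hEEnonneg : ∀ n, 0 ≤ EE n := fun n => bInner_self_nonneg _
  have hQanti : ∀ n k, n ≤ k → Q k ≤ Q n := by
    intro n k hnk
    induction k with
    | zero =>
        have h0 : n = 0 := Nat.le_zero.mp hnk
        rw [h0]
    | succ k ih =>
        rcases Nat.lt_or_ge n (k+1) with hlt | hge
        · have hk : n ≤ k := Nat.lt_succ_iff.mp hlt
          have h1 := hQstep k
          have h2 := hEEnonneg k
          linarith [ih hk]
        · have heq : n = k + 1 := le_antisymm hnk hge
          rw [heq]
  have hQ0 : ∀ n, Q n ≤ Q 0 := fun n => hQanti 0 n (Nat.zero_le n)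
  have hEEsum : ∀ N, ∑ k ∈ Finset.range N, EE k ≤ Q 0 := by
    intro N
    have key : ∀ N, ∑ k ∈ Finset.range N, EE k + Q N ≤ Q 0 := by
      intro N
      induction N with
      | zero => simp
      | succ N ih =>
          rw [Finset.sum_range_succ]
          have := hQstep N
          linarith
    have := key N
    have := hQnonneg N
    linarith
  have hEE0 : Tendsto EE atTop (𝓝 0) := by
    apply Summable.tendsto_atTop_zero
    exact summable_of_sum_range_le hEEnonneg hEEsum
  have hEEleQ0 : ∀ n, EE n ≤ Q 0 := by
    intro n
    have h1 : EE n ≤ ∑ k ∈ Finset.range (n+1), EE k :=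
      Finset.single_le_sum (fun k _ => hEEnonneg k) (Finset.self_mem_range_succ n)
    linarith [hEEsum (n+1)]
  -- ### norm bounds
  set SQ : ℝ := Real.sqrt (Q 0) with hSQdef
  have hSQ0 : 0 ≤ SQ := Real.sqrt_nonneg _
  have hnorm_le_sqrt : ∀ (x : Fin m → X) (j : Fin m) (c : ℝ), bInner x x ≤ c →
      ‖x j‖ ≤ Real.sqrt c := by
    intro x j c hxc
    have h1 : ‖x j‖^2 ≤ c := le_trans (bInner_component_le x j) hxc
    have h2 := Real.sqrt_le_sqrt h1
    rwa [Real.sqrt_sq (norm_nonneg _)] at h2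
  have hzy_bound : ∀ n i, ‖z n i - yhat i‖ ≤ SQ := by
    intro n i
    have := hnorm_le_sqrt (z n - yhat) i (Q 0) (hQ0 n)
    simpa using this
  have he_bound : ∀ n i, ‖e n i‖ ≤ Real.sqrt (EE n) :=
    fun n i => hnorm_le_sqrt (e n) i (EE n) (le_refl _)
  have he_SQ : ∀ n i, ‖e n i‖ ≤ SQ :=
    fun n i => le_trans (he_bound n i) (Real.sqrt_le_sqrt (hEEleQ0 n))
  set CY : ℝ := ∑ j, ‖yhat j‖ with hCY
  set CB : ℝ := SQ + CY with hCB
  have hz_bound : ∀ n i, ‖z n i‖ ≤ CB := by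
    intro n i
    have h1 : ‖z n i‖ ≤ ‖z n i - yhat i‖ + ‖yhat i‖ := by
      calc ‖z n i‖ = ‖(z n i - yhat i) + yhat i‖ := by rw [sub_add_cancel]
        _ ≤ ‖z n i - yhat i‖ + ‖yhat i‖ := norm_add_le _ _
    have h2 : ‖yhat i‖ ≤ CY :=
      Finset.single_le_sum (f := fun j => ‖yhat j‖) (fun j _ => norm_nonneg _) (Finset.mem_univ i)
    rw [hCB]
    linarith [hzy_bound n i]
  have hCB0 : 0 ≤ CB := le_trans (norm_nonneg _) (hz_bound 0 ⟨0, hmpos⟩)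
  -- ### the mean of z and the drift decomposition of xb
  set V : X := ∑ i, v i with hVdef
  set MZ : ℕ → X := fun n => (m:ℝ)⁻¹ • ∑ i, z n i with hMZdef
  have hMZ_bound : ∀ n, ‖MZ n‖ ≤ CB := by
    intro n
    have h1 : ‖∑ i, z n i‖ ≤ ∑ i, ‖z n i‖ := norm_sum_le _ _
    have h2 : ∑ i, ‖z n i‖ ≤ (m:ℝ) * CB := by
      calc ∑ i, ‖z n i‖ ≤ ∑ _i : Fin m, CB := Finset.sum_le_sum fun i _ => hz_bound n i
        _ = (m:ℝ) * CB := by simp [Finset.sum_const, Finset.card_univ]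
    have h3 : ‖MZ n‖ = ‖(m:ℝ)‖⁻¹ * ‖∑ i, z n i‖ := by
      rw [hMZdef]; simp [norm_smul]
    rw [h3, Real.norm_eq_abs, abs_of_pos hmR]
    calc (m:ℝ)⁻¹ * ‖∑ i, z n i‖ ≤ (m:ℝ)⁻¹ * ((m:ℝ) * CB) := by
          apply mul_le_mul_of_nonneg_left (le_trans h1 h2) (by positivity)
      _ = CB := by field_simp
  have hxz : ∀ n i, xs n i = z n i - (n:ℝ) • v i := by
    intro n i; simp only [hzdef]; abel
  have hsum_z : ∀ n, ∑ i, z n i = ∑ i, xs n i + (n:ℝ) • V := by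
    intro n
    rw [hVdef, Finset.smul_sum, ← Finset.sum_add_distrib]
  have hxbMZ : ∀ n, xb n = MZ n - ((n:ℝ)/(m:ℝ)) • V := by
    intro n
    rw [hxb n, hMZdef]
    rw [show ∑ i, xs n i = ∑ i, z n i - (n:ℝ) • V by rw [hsum_z n]; abel]
    rw [smul_sub, smul_smul, show (m:ℝ)⁻¹ * (n:ℝ) = (n:ℝ)/(m:ℝ) by field_simp]
  -- ### real values of g along the iteration
  have hGpex : ∀ n i, ∃ r : ℝ, g i (p n i) = (r : EReal) :=
    fun n i => isProx_real (hgproper i) (hprox i) _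
  choose Gp hGp using hGpex
  set Wc : Fin m → ℝ := fun i => (EConj (g i) (w i)).toReal with hWc
  have hFY : ∀ n, bInner (p n) w ≤ (∑ i, Gp n i) + ∑ i, Wc i := by
    intro n
    calc bInner (p n) w = ∑ i, ⟪p n i, w i⟫ := rfl
      _ ≤ ∑ i, (Gp n i + Wc i) :=
          Finset.sum_le_sum fun i _ => econj_fy (hwtop i) (hGp n i)
      _ = (∑ i, Gp n i) + ∑ i, Wc i := Finset.sum_add_distrib
  set An : ℕ → ℝ := fun n => ∑ i, ⟪(chat - v i) - p n i, (2 • xb n - xs n i) - p n i⟫ with hAn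
  have hsubgrad : ∀ n, (∑ i, Gp n i) + An n ≤ ∑ i, Bh i := by
    intro n
    have h1 : ∀ i, Gp n i + ⟪(chat - v i) - p n i, (2 • xb n - xs n i) - p n i⟫ ≤ Bh i := by
      intro i
      have h2' : g i (p n i) +
          ((⟪(chat - v i) - p n i, (2 • xb n - xs n i) - p n i⟫ : ℝ) : EReal) ≤
          g i (chat - v i) :=
        isProx_subgrad (hgproper i) (hgconv i) (hprox i) (2 • xb n - xs n i) (chat - v i)
      rw [hGp n i, hBh i, ← EReal.coe_add, EReal.coe_le_coe_iff] at h2'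
      exact h2'
    calc (∑ i, Gp n i) + An n
        = ∑ i, (Gp n i + ⟪(chat - v i) - p n i, (2 • xb n - xs n i) - p n i⟫) :=
          Finset.sum_add_distrib.symm
      _ ≤ ∑ i, Bh i := Finset.sum_le_sum fun i _ => h1 i
  -- ### lower bound for the left side of the Fenchel-Young chain
  set CW : ℝ := ∑ j, ‖w j‖ with hCWdef
  have hCW0 : 0 ≤ CW := Finset.sum_nonneg fun j _ => norm_nonneg _
  have hw_bound : ∀ i, ‖w i‖ ≤ CW :=
    fun i => Finset.single_le_sum (f := fun j => ‖w j‖) (fun j _ => norm_nonneg _)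
      (Finset.mem_univ i)
  set CV : ℝ := ∑ j, ‖v j‖ with hCVdef
  have hCV0 : 0 ≤ CV := Finset.sum_nonneg fun j _ => norm_nonneg _
  have hv_bound : ∀ i, ‖v i‖ ≤ CV :=
    fun i => Finset.single_le_sum (f := fun j => ‖v j‖) (fun j _ => norm_nonneg _)
      (Finset.mem_univ i)
  have hpw : ∀ n, bInner (p n) w = - bInner v w - bInner (e n) w := by
    intro n
    have h1 : ∀ i, ⟪p n i, w i⟫ = ⟪xb n, w i⟫ - ⟪v i, w i⟫ - ⟪e n i, w i⟫ := by
      intro i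
      rw [hpe n i, inner_sub_left, inner_sub_left]
    calc bInner (p n) w = ∑ i, (⟪xb n, w i⟫ - ⟪v i, w i⟫ - ⟪e n i, w i⟫) :=
          Finset.sum_congr rfl fun i _ => h1 i
      _ = ∑ i, ⟪xb n, w i⟫ - bInner v w - bInner (e n) w := by
          rw [Finset.sum_sub_distrib, Finset.sum_sub_distrib]; rfl
      _ = - bInner v w - bInner (e n) w := by
          rw [← inner_sum, hwsum, inner_zero_right]; ring
  have hAn_upper : ∀ n, An n ≤ (∑ i, Bh i) + (∑ i, Wc i) + (m:ℝ) * (CV * CW)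
      + (m:ℝ) * (SQ * CW) := by
    intro n
    have h1 := hFY n
    have h2 := hsubgrad n
    have h3 : |bInner v w| ≤ (m:ℝ) * (CV * CW) :=
      bInner_abs_le v w CV CW hv_bound hw_bound hCV0
    have h4 : |bInner (e n) w| ≤ (m:ℝ) * (SQ * CW) :=
      bInner_abs_le (e n) w SQ CW (he_SQ n) hw_bound hSQ0
    have h5 := hpw n
    obtain ⟨h6a, h6b⟩ := abs_le.mp h3
    obtain ⟨h7a, h7b⟩ := abs_le.mp h4
    linarith
  -- ### the exact identity for An
  have hfac1 : ∀ n i, (chat - v i) - p n i = (chat - (MZ n - ((n:ℝ)/(m:ℝ)) • V)) + e n i := by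
    intro n i
    rw [hpe n i, hxbMZ n]
    abel
  have hfac2 : ∀ n i, (2 • xb n - xs n i) - p n i
      = ((MZ n - ((n:ℝ)/(m:ℝ)) • V) - (z n i - (n:ℝ) • v i)) + v i + e n i := by
    intro n i
    rw [hpe n i, ← hxz n i, two_smul, hxbMZ n]
    abel
  have hAnId : ∀ n, An n = ((n:ℝ)/(m:ℝ)) * ⟪V, V⟫ + ((n:ℝ)+1) * bInner (e n) v + EE n
      + ⟪chat - MZ n, V + ∑ i, e n i⟫ + bInner (e n) (fun i => MZ n - z n i) := by
    intro n
    calc An n = ∑ i, ⟪(chat - (MZ n - ((n:ℝ)/(m:ℝ)) • V)) + e n i,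
          ((MZ n - ((n:ℝ)/(m:ℝ)) • V) - (z n i - (n:ℝ) • v i)) + v i + e n i⟫ :=
          Finset.sum_congr rfl fun i _ => by rw [hfac1 n i, hfac2 n i]
      _ = _ := an_identity hmne chat (MZ n) V (n:ℝ) v (z n) (e n) hVdef rfl
  -- ### bounds for the residual terms in the identity
  have hT1 : ∀ n, |⟪chat - MZ n, V + ∑ i, e n i⟫|
      ≤ (‖chat‖ + CB) * (‖V‖ + (m:ℝ) * Real.sqrt (EE n)) := by
    intro n
    have h1 : ‖chat - MZ n‖ ≤ ‖chat‖ + CB :=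
      le_trans (norm_sub_le _ _) (by linarith [hMZ_bound n])
    have h2 : ‖V + ∑ i, e n i‖ ≤ ‖V‖ + (m:ℝ) * Real.sqrt (EE n) := by
      have h3 : ‖∑ i, e n i‖ ≤ ∑ i, ‖e n i‖ := norm_sum_le _ _
      have h4 : ∑ i, ‖e n i‖ ≤ (m:ℝ) * Real.sqrt (EE n) := by
        calc ∑ i, ‖e n i‖ ≤ ∑ _i : Fin m, Real.sqrt (EE n) :=
              Finset.sum_le_sum fun i _ => he_bound n i
          _ = (m:ℝ) * Real.sqrt (EE n) := by simp [Finset.sum_const, Finset.card_univ]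
      calc ‖V + ∑ i, e n i‖ ≤ ‖V‖ + ‖∑ i, e n i‖ := norm_add_le _ _
        _ ≤ ‖V‖ + (m:ℝ) * Real.sqrt (EE n) := by linarith
    calc |⟪chat - MZ n, V + ∑ i, e n i⟫| ≤ ‖chat - MZ n‖ * ‖V + ∑ i, e n i‖ :=
          abs_real_inner_le_norm _ _
      _ ≤ (‖chat‖ + CB) * (‖V‖ + (m:ℝ) * Real.sqrt (EE n)) :=
          mul_le_mul h1 h2 (norm_nonneg _) (by positivity)
  have hT2 : ∀ n, |bInner (e n) (fun i => MZ n - z n i)|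
      ≤ (m:ℝ) * (Real.sqrt (EE n) * (CB + CB)) := by
    intro n
    apply bInner_abs_le (e n) _ (Real.sqrt (EE n)) (CB + CB) (he_bound n)
      (fun i => le_trans (norm_sub_le _ _) (by linarith [hMZ_bound n, hz_bound n i]))
      (Real.sqrt_nonneg _)
  -- ### conclusion : V = 0
  have hVzero : V = 0 := by
    by_contra hVne
    have hVpos : 0 < ⟪V, V⟫ := by
      rw [real_inner_self_eq_norm_sq]
      have : 0 < ‖V‖ := norm_pos_iff.mpr hVne
      positivity
    set K : ℝ := (∑ i, Bh i) + (∑ i, Wc i) + (m:ℝ) * (CV * CW) + (m:ℝ) * (SQ * CW)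
      + (‖chat‖ + CB) * (‖V‖ + (m:ℝ) * SQ) + (m:ℝ) * (SQ * (CB + CB)) with hK
    have hKb : ∀ n : ℕ, ((n:ℝ)/(m:ℝ)) * ⟪V, V⟫ ≤ K := by
      intro n
      have h1 := hAn_upper n
      have h2 := hAnId n
      have h3 := hT1 n
      have h4 := hT2 n
      have h5 : Real.sqrt (EE n) ≤ SQ := Real.sqrt_le_sqrt (hEEleQ0 n)
      have h6 : 0 ≤ ((n:ℝ)+1) * bInner (e n) v :=
        mul_nonneg (by positivity) (hEV n)
      have h7 := hEEnonneg n
      obtain ⟨h8a, h8b⟩ := abs_le.mp h3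
      obtain ⟨h9a, h9b⟩ := abs_le.mp h4
      have h10 : (‖chat‖ + CB) * (‖V‖ + (m:ℝ) * Real.sqrt (EE n))
          ≤ (‖chat‖ + CB) * (‖V‖ + (m:ℝ) * SQ) := by
        apply mul_le_mul_of_nonneg_left _ (by positivity)
        have : (m:ℝ) * Real.sqrt (EE n) ≤ (m:ℝ) * SQ :=
          mul_le_mul_of_nonneg_left h5 (le_of_lt hmR)
        linarith
      have h11 : (m:ℝ) * (Real.sqrt (EE n) * (CB + CB)) ≤ (m:ℝ) * (SQ * (CB + CB)) := by
        apply mul_le_mul_of_nonneg_left _ (le_of_lt hmR)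
        apply mul_le_mul_of_nonneg_right h5 (by linarith)
      rw [hK]
      have e1 : ((n:ℝ) / (m:ℝ)) * ⟪V,V⟫ = An n - (((n:ℝ)+1) * bInner (e n) v) - EE n
          - ⟪chat - MZ n, V + ∑ i, e n i⟫ - bInner (e n) (fun i => MZ n - z n i) := by
        rw [h2]; ring
      have hstepA : ((n:ℝ) / (m:ℝ)) * ⟪V,V⟫ ≤ An n
          + (‖chat‖ + CB) * (‖V‖ + (m:ℝ) * Real.sqrt (EE n))
          + (m:ℝ) * (Real.sqrt (EE n) * (CB + CB)) := by
        rw [e1]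
        linarith [h6, h7, h8a, h9a]
      calc ((n:ℝ) / (m:ℝ)) * ⟪V,V⟫ ≤ An n
            + (‖chat‖ + CB) * (‖V‖ + (m:ℝ) * Real.sqrt (EE n))
            + (m:ℝ) * (Real.sqrt (EE n) * (CB + CB)) := hstepA
        _ ≤ (∑ i, Bh i) + (∑ i, Wc i) + (m:ℝ) * (CV * CW) + (m:ℝ) * (SQ * CW)
            + (‖chat‖ + CB) * (‖V‖ + (m:ℝ) * SQ) + (m:ℝ) * (SQ * (CB + CB)) := by
          linarith [h1, h10, h11]
    obtain ⟨n, hn⟩ := exists_nat_gt (K * (m:ℝ) / ⟪V, V⟫)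
    have h12 := hKb n
    have h14 : (n:ℝ) * ⟪V,V⟫ ≤ K * (m:ℝ) := by
      rw [div_mul_eq_mul_div, div_le_iff₀ hmR] at h12
      linarith
    have h15 : (n:ℝ) ≤ K * (m:ℝ) / ⟪V,V⟫ := by
      rw [le_div_iff₀ hVpos]
      linarith
    linarith
  -- ### consequences of V = 0
  have hxbMZ0 : ∀ n, xb n = MZ n := by
    intro n
    rw [hxbMZ n, hVzero, smul_zero, sub_zero]
  have hsumb : ∑ i, b i = 0 := by
    have h1 : ∀ i, b i = v i - a i := fun i => by rw [hvib i]; abel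
    calc ∑ i, b i = ∑ i, (v i - a i) := Finset.sum_congr rfl fun i _ => h1 i
      _ = V - ∑ i, a i := by rw [Finset.sum_sub_distrib, hVdef]
      _ = 0 := by rw [hVzero, hasum, sub_zero]
  have hsq0 : Tendsto (fun n => Real.sqrt (EE n)) atTop (𝓝 0) := by
    have h1 : Tendsto (fun n => Real.sqrt (EE n)) atTop (𝓝 (Real.sqrt 0)) :=
      (Real.continuous_sqrt.tendsto 0).comp hEE0
    rwa [Real.sqrt_zero] at h1
  have he_tendsto : ∀ i, Tendsto (fun n => e n i) atTop (𝓝 0) := by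
    intro i
    exact squeeze_zero_norm (fun n => he_bound n i) hsq0
  -- error bound for the sum of the values
  set KK : ℝ := (‖chat‖ + CB) * (m:ℝ) + (m:ℝ) * (CB + CB) with hKK
  have hKK0 : 0 ≤ KK := by
    have := norm_nonneg chat
    rw [hKK]; positivity
  have hGpsum : ∀ n, (∑ i, Gp n i) ≤ (∑ i, Bh i) + KK * Real.sqrt (EE n) := by
    intro n
    have h1 := hsubgrad n
    have h2 := hAnId n
    have h3 := hT1 n
    have h4 := hT2 n
    obtain ⟨h3a, h3b⟩ := abs_le.mp h3
    obtain ⟨h4a, h4b⟩ := abs_le.mp h4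
    have h6 : 0 ≤ ((n:ℝ)+1) * bInner (e n) v := mul_nonneg (by positivity) (hEV n)
    have h7 := hEEnonneg n
    have hV0 : ‖V‖ = 0 := by rw [hVzero, norm_zero]
    have hipV : ⟪V, V⟫ = 0 := by rw [hVzero, inner_zero_left]
    rw [hipV, mul_zero] at h2
    rw [hV0] at h3a
    have hKKe : (‖chat‖ + CB) * (0 + (m:ℝ) * Real.sqrt (EE n))
        + (m:ℝ) * (Real.sqrt (EE n) * (CB + CB)) = KK * Real.sqrt (EE n) := by
      rw [hKK]; ring
    nlinarith [h1, h2, h3a, h4a]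
  have hτ0 : Tendsto (fun n => (∑ i, Bh i) + KK * Real.sqrt (EE n)) atTop
      (𝓝 ((∑ i, Bh i) + KK * 0)) :=
    tendsto_const_nhds.add (hsq0.const_mul KK)
  -- ### uniform bounds on the real values Gp
  set CPP : ℝ := CB + CV + SQ + ‖chat‖ + CV with hCPP
  have hp_norm : ∀ n i, ‖p n i‖ ≤ CB + CV + SQ := by
    intro n i
    rw [hpe n i]
    have h1 : ‖xb n‖ ≤ CB := by rw [hxbMZ0 n]; exact hMZ_bound n
    calc ‖xb n - v i - e n i‖ ≤ ‖xb n - v i‖ + ‖e n i‖ := norm_sub_le _ _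
      _ ≤ ‖xb n‖ + ‖v i‖ + ‖e n i‖ := by linarith [norm_sub_le (xb n) (v i)]
      _ ≤ CB + CV + SQ := by linarith [hv_bound i, he_SQ n i]
  have hGplb : ∀ n i, Bh i - CPP * ‖b i‖ ≤ Gp n i := by
    intro n i
    have h1 := hbi i (p n i)
    rw [hGp n i, ← EReal.coe_add, EReal.coe_le_coe_iff] at h1
    have h2 : |⟪p n i - (chat - v i), b i⟫| ≤ CPP * ‖b i‖ := by
      calc |⟪p n i - (chat - v i), b i⟫| ≤ ‖p n i - (chat - v i)‖ * ‖b i‖ :=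
            abs_real_inner_le_norm _ _
        _ ≤ CPP * ‖b i‖ := by
            apply mul_le_mul_of_nonneg_right _ (norm_nonneg _)
            calc ‖p n i - (chat - v i)‖ ≤ ‖p n i‖ + ‖chat - v i‖ := norm_sub_le _ _
              _ ≤ ‖p n i‖ + (‖chat‖ + ‖v i‖) := by linarith [norm_sub_le chat (v i)]
              _ ≤ CPP := by rw [hCPP]; linarith [hp_norm n i, hv_bound i]
    obtain ⟨h2a, h2b⟩ := abs_le.mp h2
    linarith
  set E8 : Fin m → ℝ := fun i => |Bh i| + CPP * ‖b i‖ with hE8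
  have hE80 : ∀ i, 0 ≤ E8 i := by
    intro i
    have h1 : 0 ≤ CPP := by
      rw [hCPP]
      have := norm_nonneg chat
      linarith [hCB0, hCV0, hSQ0]
    rw [hE8]
    positivity
  have hGplb' : ∀ n i, -E8 i ≤ Gp n i := by
    intro n i
    have := hGplb n i
    have h1 : -(|Bh i|) ≤ Bh i := neg_abs_le _
    have h2 : 0 ≤ CPP * ‖b i‖ := le_trans (by positivity) (le_of_eq rfl)
    have h3 : 0 ≤ CPP := by
      rw [hCPP]; have := norm_nonneg chat; linarith [hCB0, hCV0, hSQ0]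
    have h4 : 0 ≤ CPP * ‖b i‖ := mul_nonneg h3 (norm_nonneg _)
    rw [hE8]
    simp only
    linarith
  set C8 : ℝ := |∑ i, Bh i| + KK * SQ + ∑ j, E8 j with hC8
  have hGp_abs : ∀ n i, |Gp n i| ≤ C8 := by
    intro n i
    have hub : Gp n i ≤ |∑ j, Bh j| + KK * SQ + ∑ j ∈ Finset.univ.erase i, E8 j := by
      have h1 : Gp n i + ∑ j ∈ Finset.univ.erase i, Gp n j = ∑ j, Gp n j :=
        Finset.add_sum_erase _ _ (Finset.mem_univ i)
      have h2 : ∑ j ∈ Finset.univ.erase i, (-(E8 j)) ≤ ∑ j ∈ Finset.univ.erase i, Gp n j :=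
        Finset.sum_le_sum fun j _ => hGplb' n j
      have h3 := hGpsum n
      have h4 : KK * Real.sqrt (EE n) ≤ KK * SQ :=
        mul_le_mul_of_nonneg_left (Real.sqrt_le_sqrt (hEEleQ0 n)) hKK0
      have h5 : (∑ j, Bh j) ≤ |∑ j, Bh j| := le_abs_self _
      have h6 : ∑ j ∈ Finset.univ.erase i, (-(E8 j)) = -(∑ j ∈ Finset.univ.erase i, E8 j) :=
        Finset.sum_neg_distrib _
      linarith
    have hlb : -C8 ≤ Gp n i := by
      have h1 := hGplb' n i
      have h2 : E8 i ≤ ∑ j, E8 j :=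
        Finset.single_le_sum (fun j _ => hE80 j) (Finset.mem_univ i)
      have h3 : 0 ≤ |∑ i, Bh i| := abs_nonneg _
      have h4 : 0 ≤ KK * SQ := mul_nonneg hKK0 hSQ0
      rw [hC8]
      linarith
    have herase : ∑ j ∈ Finset.univ.erase i, E8 j ≤ ∑ j, E8 j := by
      apply Finset.sum_le_sum_of_subset_of_nonneg (Finset.erase_subset _ _)
      intro j _ _
      exact hE80 j
    rw [abs_le]
    constructor
    · exact hlb
    · rw [hC8]; linarith
  -- ### compactness: the z-sequence lives in a ball
  have hC80 : 0 ≤ C8 := le_trans (abs_nonneg _) (hGp_abs 0 ⟨0, hmpos⟩)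
  have hz_ball : ∀ n, z n ∈ Metric.closedBall (0 : Fin m → X) CB := by
    intro n
    rw [Metric.mem_closedBall, dist_zero_right]
    exact (pi_norm_le_iff_of_nonneg hCB0).mpr fun i => hz_bound n i
  have hGp_ball : ∀ n, (fun i => Gp n i) ∈ Metric.closedBall (0 : Fin m → ℝ) C8 := by
    intro n
    rw [Metric.mem_closedBall, dist_zero_right]
    apply (pi_norm_le_iff_of_nonneg hC80).mpr
    intro i
    rw [Real.norm_eq_abs]
    exact hGp_abs n i
  -- ### cluster point analysis
  have cluster_analysis : ∀ (φ : ℕ → ℕ), StrictMono φ → ∀ zst : Fin m → X,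
      Tendsto (fun k => z (φ k)) atTop (𝓝 zst) →
      (Tendsto (fun k => xb (φ k)) atTop (𝓝 ((m:ℝ)⁻¹ • ∑ j, zst j))) ∧
      (∀ (i : Fin m) (zz : X), g i (((m:ℝ)⁻¹ • ∑ j, zst j) - v i) +
          ((⟪zz - (((m:ℝ)⁻¹ • ∑ j, zst j) - v i), b i⟫ : ℝ) : EReal) ≤ g i zz) ∧
      ((∑ i, g i (((m:ℝ)⁻¹ • ∑ j, zst j) - v i)) ≤ ((∑ i, Bh i : ℝ) : EReal)) := by
    intro φ hφ zst hzst
    set cst : X := (m:ℝ)⁻¹ • ∑ j, zst j with hcst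
    have hcomp : ∀ i, Tendsto (fun k => z (φ k) i) atTop (𝓝 (zst i)) :=
      fun i => ((continuous_apply i).tendsto zst).comp hzst
    have hMZt : Tendsto (fun k => MZ (φ k)) atTop (𝓝 cst) := by
      apply Tendsto.const_smul
      exact tendsto_finset_sum _ (fun i _ => hcomp i)
    have hxbt : Tendsto (fun k => xb (φ k)) atTop (𝓝 cst) := by
      have h1 : (fun k => xb (φ k)) = fun k => MZ (φ k) := funext fun k => hxbMZ0 _
      rw [h1]; exact hMZt
    have het : ∀ i, Tendsto (fun k => e (φ k) i) atTop (𝓝 0) :=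
      fun i => (he_tendsto i).comp hφ.tendsto_atTop
    have hpt : ∀ i, Tendsto (fun k => p (φ k) i) atTop (𝓝 (cst - v i)) := by
      intro i
      have h1 : (fun k => p (φ k) i) = fun k => xb (φ k) - v i - e (φ k) i :=
        funext fun k => hpe _ i
      rw [h1]
      have h2 := (hxbt.sub (tendsto_const_nhds (x := v i))).sub (het i)
      simpa using h2
    obtain ⟨γ, ψ, hψ, hγ⟩ := bw_subseq (fun k => (fun i => Gp (φ k) i)) C8 0
      (fun k => hGp_ball _)
    have hγi : ∀ i, Tendsto (fun k => Gp (φ (ψ k)) i) atTop (𝓝 (γ i)) :=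
      fun i => ((continuous_apply i).tendsto γ).comp hγ
    have hlsc : ∀ i, g i (cst - v i) ≤ ((γ i : ℝ) : EReal) := by
      intro i
      exact lsc_le_of_tendsto (hglsc i) ((hpt i).comp hψ.tendsto_atTop)
        (fun k => hGp _ i) (hγi i)
    have hsumγ : (∑ i, γ i) ≤ ∑ i, Bh i := by
      have h1 : Tendsto (fun k => ∑ i, Gp (φ (ψ k)) i) atTop (𝓝 (∑ i, γ i)) :=
        tendsto_finset_sum _ (fun i _ => hγi i)
      have h2 : Tendsto (fun k => (∑ i, Bh i) + KK * Real.sqrt (EE (φ (ψ k)))) atTop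
          (𝓝 ((∑ i, Bh i) + KK * 0)) := hτ0.comp (hφ.comp hψ).tendsto_atTop
      have h4 := le_of_tendsto_of_tendsto' h1 h2 (fun k => hGpsum _)
      linarith
    set β : Fin m → ℝ := fun i => Bh i + ⟪cst - chat, b i⟫ with hβ
    have hβγ : ∀ i, β i ≤ γ i := by
      intro i
      have h1 := hbi i (cst - v i)
      have h2 : (cst - v i) - (chat - v i) = cst - chat := by abel
      rw [h2, ← EReal.coe_add] at h1
      have h3 := le_trans h1 (hlsc i)
      rw [EReal.coe_le_coe_iff] at h3
      rw [hβ]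
      exact h3
    have hsumβ : ∑ i, β i = ∑ i, Bh i := by
      rw [hβ, Finset.sum_add_distrib]
      have h1 : ∑ i, ⟪cst - chat, b i⟫ = ⟪cst - chat, ∑ i, b i⟫ := (inner_sum _ _ _).symm
      rw [h1, hsumb, inner_zero_right, add_zero]
    have hγβ : ∀ i, γ i = β i := by
      have h1 : ∑ i, (γ i - β i) = 0 := by
        have h2 : ∑ i, (γ i - β i) ≤ 0 := by
          rw [Finset.sum_sub_distrib, hsumβ]
          linarith
        have h3 : 0 ≤ ∑ i, (γ i - β i) :=
          Finset.sum_nonneg fun i _ => by linarith [hβγ i]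
        linarith
      intro i
      have h4 := (Finset.sum_eq_zero_iff_of_nonneg
        (fun i _ => by linarith [hβγ i] : ∀ i ∈ Finset.univ, 0 ≤ γ i - β i)).mp h1
      have h5 := h4 i (Finset.mem_univ i)
      linarith
    have hval : ∀ i, g i (cst - v i) ≤ ((β i : ℝ) : EReal) := by
      intro i
      rw [← hγβ i]
      exact hlsc i
    refine ⟨hxbt, ?_, ?_⟩
    · intro i zz
      have h1 : g i (cst - v i) + ((⟪zz - (cst - v i), b i⟫ : ℝ) : EReal)
          ≤ ((β i + ⟪zz - (cst - v i), b i⟫ : ℝ) : EReal) := by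
        rw [EReal.coe_add]
        exact add_le_add_left (hval i) _
      have h2 : β i + ⟪zz - (cst - v i), b i⟫ = Bh i + ⟪zz - (chat - v i), b i⟫ := by
        rw [hβ]
        have h3 : ⟪cst - chat, b i⟫ + ⟪zz - (cst - v i), b i⟫ = ⟪zz - (chat - v i), b i⟫ := by
          rw [← inner_add_left]
          congr 1
          abel
        simp only
        linarith [h3]
      rw [h2] at h1
      refine le_trans h1 ?_
      rw [EReal.coe_add]
      exact hbi i zz
    · calc ∑ i, g i (cst - v i) ≤ ∑ i, ((β i : ℝ) : EReal) :=
            Finset.sum_le_sum fun i _ => hval i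
        _ = ((∑ i, β i : ℝ) : EReal) := (ereal_coe_sum _ _).symm
        _ = ((∑ i, Bh i : ℝ) : EReal) := by rw [hsumβ]
  -- ### minimality of the reference value
  have hmin : ∀ zz : X, ((∑ i, Bh i : ℝ) : EReal) ≤ ∑ i, g i (zz - v i) := by
    intro zz
    have h1 : ∀ i, ((Bh i + ⟪zz - chat, b i⟫ : ℝ) : EReal) ≤ g i (zz - v i) := by
      intro i
      have h2 := hbi i (zz - v i)
      have h3 : (zz - v i) - (chat - v i) = zz - chat := by abel
      rw [h3, ← EReal.coe_add] at h2
      exact h2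
    calc ((∑ i, Bh i : ℝ) : EReal) = ((∑ i, (Bh i + ⟪zz - chat, b i⟫) : ℝ) : EReal) := by
          rw [Finset.sum_add_distrib, ← inner_sum, hsumb, inner_zero_right, add_zero]
      _ = ∑ i, ((Bh i + ⟪zz - chat, b i⟫ : ℝ) : EReal) := ereal_coe_sum _ _
      _ ≤ ∑ i, g i (zz - v i) := Finset.sum_le_sum fun i _ => h1 i
  -- ### the mean of a diagonal-plus-a vector
  have hmean_c : ∀ c : X, c = (m:ℝ)⁻¹ • ∑ i : Fin m, (c + a i) := by
    intro c
    rw [Finset.sum_add_distrib, hasum, add_zero, Finset.sum_const, Finset.card_univ,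
      Fintype.card_fin, ← Nat.cast_smul_eq_nsmul ℝ m c, inv_smul_smul₀ hmne]
  -- ### Fejér limits for admissible targets
  have fej_anti : ∀ (y : Fin m → X) (c : X), c = (m:ℝ)⁻¹ • ∑ i, y i →
      (∀ i, prox i (2 • c - y i) = c - v i) →
      ∀ n k, n ≤ k → bInner (z k - y) (z k - y) ≤ bInner (z n - y) (z n - y) := by
    intro y c hc hy n k hnk
    induction k with
    | zero =>
        have h0 : n = 0 := Nat.le_zero.mp hnk
        rw [h0]
    | succ k ih =>
        rcases Nat.lt_or_ge n (k+1) with hlt | hge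
        · have hk : n ≤ k := Nat.lt_succ_iff.mp hlt
          have h1 := fejer y c hc hy k
          have h2 : 0 ≤ bInner (e k) (e k) := bInner_self_nonneg _
          have h3 : 0 ≤ 2*(k:ℝ) * bInner (e k) v := mul_nonneg (by positivity) (hEV k)
          linarith [ih hk]
        · have heq : n = k + 1 := le_antisymm hnk hge
          rw [heq]
  have fej_lim : ∀ (y : Fin m → X) (c : X), c = (m:ℝ)⁻¹ • ∑ i, y i →
      (∀ i, prox i (2 • c - y i) = c - v i) →
      ∃ L, Tendsto (fun n => bInner (z n - y) (z n - y)) atTop (𝓝 L) := by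
    intro y c hc hy
    refine ⟨⨅ n, bInner (z n - y) (z n - y), tendsto_atTop_ciInf ?_ ?_⟩
    · intro n k hnk
      exact fej_anti y c hc hy n k hnk
    · refine ⟨0, ?_⟩
      rintro x ⟨n, rfl⟩
      exact bInner_self_nonneg _
  have hQcont : ∀ (y : Fin m → X) (φ : ℕ → ℕ) (zst : Fin m → X),
      Tendsto (fun k => z (φ k)) atTop (𝓝 zst) →
      Tendsto (fun k => bInner (z (φ k) - y) (z (φ k) - y)) atTop
        (𝓝 (bInner (zst - y) (zst - y))) := by
    intro y φ zst h
    have hcomp : ∀ i, Tendsto (fun k => z (φ k) i) atTop (𝓝 (zst i)) :=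
      fun i => ((continuous_apply i).tendsto zst).comp h
    have h2 : ∀ i, Tendsto (fun k => (⟪z (φ k) i - y i, z (φ k) i - y i⟫ : ℝ)) atTop
        (𝓝 ⟪zst i - y i, zst i - y i⟫) := by
      intro i
      exact ((hcomp i).sub (tendsto_const_nhds (x := y i))).inner
        ((hcomp i).sub (tendsto_const_nhds (x := y i)))
    exact tendsto_finset_sum _ (fun i _ => h2 i)
  -- ### extraction of the main cluster point
  obtain ⟨zstar, φ1, hφ1, hzstar⟩ := bw_subseq z CB 0 hz_ball
  have hzstar' : Tendsto (fun k => z (φ1 k)) atTop (𝓝 zstar) := hzstar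
  obtain ⟨hxbt1, hcert1, hval1⟩ := cluster_analysis φ1 hφ1 zstar hzstar'
  set cstar : X := (m:ℝ)⁻¹ • ∑ j, zstar j with hcstar
  have hproxstar : ∀ i, prox i (2 • cstar - (cstar + a i)) = cstar - v i := mk_prox cstar hcert1
  -- ### convergence of the averaged sequence
  have hxbconv : Tendsto xb atTop (𝓝 cstar) := by
    by_contra hnot
    rw [Metric.tendsto_atTop] at hnot
    push_neg at hnot
    obtain ⟨ε, hε, hfreq⟩ := hnot
    have hfreq2 : ∃ᶠ n in atTop, ε ≤ dist (xb n) cstar := by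
      rw [Filter.frequently_atTop]
      intro N
      obtain ⟨n, hn1, hn2⟩ := hfreq N
      exact ⟨n, hn1, hn2⟩
    obtain ⟨ψ0, hψ0, hψ0p⟩ := Filter.extraction_of_frequently_atTop hfreq2
    obtain ⟨z2, ψ1, hψ1, hz2⟩ := bw_subseq (fun k => z (ψ0 k)) CB 0 (fun k => hz_ball _)
    have hψ : StrictMono (ψ0 ∘ ψ1) := hψ0.comp hψ1
    have hz2' : Tendsto (fun k => z ((ψ0 ∘ ψ1) k)) atTop (𝓝 z2) := hz2
    obtain ⟨hxbt2, hcert2, hval2⟩ := cluster_analysis (ψ0 ∘ ψ1) hψ z2 hz2'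
    set c2 : X := (m:ℝ)⁻¹ • ∑ j, z2 j with hc2
    have hprox2 : ∀ i, prox i (2 • c2 - (c2 + a i)) = c2 - v i := mk_prox c2 hcert2
    set ystar : Fin m → X := fun i => cstar + a i with hystar
    set y2 : Fin m → X := fun i => c2 + a i with hy2
    obtain ⟨L1, hL1⟩ := fej_lim ystar cstar (hmean_c cstar) hproxstar
    obtain ⟨L2, hL2⟩ := fej_lim y2 c2 (hmean_c c2) hprox2
    have e11 : bInner (zstar - ystar) (zstar - ystar) = L1 :=
      tendsto_nhds_unique (hQcont ystar φ1 zstar hzstar') (hL1.comp hφ1.tendsto_atTop)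
    have e21 : bInner (z2 - ystar) (z2 - ystar) = L1 :=
      tendsto_nhds_unique (hQcont ystar (ψ0 ∘ ψ1) z2 hz2') (hL1.comp hψ.tendsto_atTop)
    have e12 : bInner (zstar - y2) (zstar - y2) = L2 :=
      tendsto_nhds_unique (hQcont y2 φ1 zstar hzstar') (hL2.comp hφ1.tendsto_atTop)
    have e22 : bInner (z2 - y2) (z2 - y2) = L2 :=
      tendsto_nhds_unique (hQcont y2 (ψ0 ∘ ψ1) z2 hz2') (hL2.comp hψ.tendsto_atTop)
    have heq1 : bInner zstar zstar - 2*bInner zstar ystar + bInner ystar ystar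
        = bInner z2 z2 - 2*bInner z2 ystar + bInner ystar ystar := by
      rw [← bInner_sq_sub, ← bInner_sq_sub, e11, e21]
    have heq2 : bInner zstar zstar - 2*bInner zstar y2 + bInner y2 y2
        = bInner z2 z2 - 2*bInner z2 y2 + bInner y2 y2 := by
      rw [← bInner_sq_sub, ← bInner_sq_sub, e12, e22]
    have horth : bInner (zstar - z2) (y2 - ystar) = 0 := by
      rw [bInner_sub_left, bInner_sub_right, bInner_sub_right]
      linarith
    have hy2ys : y2 - ystar = fun _ => c2 - cstar := by
      funext i
      simp only [hy2, hystar, Pi.sub_apply]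
      abel
    have hsum_zs : ∑ i, zstar i = (m:ℝ) • cstar := by rw [hcstar, smul_inv_smul₀ hmne]
    have hsum_z2 : ∑ i, z2 i = (m:ℝ) • c2 := by rw [hc2, smul_inv_smul₀ hmne]
    have h5 : bInner (zstar - z2) (y2 - ystar) = ⟪∑ i, (zstar - z2) i, c2 - cstar⟫ := by
      rw [hy2ys]
      exact bInner_diag_right _ _
    have h6 : ∑ i, (zstar - z2) i = (m:ℝ) • (cstar - c2) := by
      simp only [Pi.sub_apply]
      rw [Finset.sum_sub_distrib, hsum_zs, hsum_z2, smul_sub]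
    rw [h5, h6, real_inner_smul_left] at horth
    have h7 : ⟪cstar - c2, c2 - cstar⟫ = - ⟪c2 - cstar, c2 - cstar⟫ := by
      rw [show cstar - c2 = -(c2 - cstar) by abel, inner_neg_left]
    rw [h7] at horth
    have h8 : ⟪c2 - cstar, c2 - cstar⟫ = (0:ℝ) := by
      rcases mul_eq_zero.mp (by linarith : (m:ℝ) * -⟪c2 - cstar, c2 - cstar⟫ = 0) with h | h
      · exact absurd h hmne
      · linarith
    have hcc : c2 = cstar := by
      have h9 : c2 - cstar = 0 := inner_self_eq_zero.mp h8
      have := sub_eq_zero.mp h9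
      exact this
    have hdist : Tendsto (fun k => dist (xb ((ψ0 ∘ ψ1) k)) cstar) atTop
        (𝓝 (dist c2 cstar)) := hxbt2.dist (tendsto_const_nhds (x := cstar))
    have hge : ε ≤ dist c2 cstar :=
      ge_of_tendsto hdist (Filter.Eventually.of_forall fun k => hψ0p (ψ1 k))
    rw [hcc, dist_self] at hge
    linarith
  exact ⟨cstar, hxbconv, fun zz => le_trans hval1 (hmin zz)⟩
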